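/- Let G = (G_i)_{i∈ℕ} be an instance of the know-all model, r ≥ 1, and 1 ≤ k ≤ |Π|, with V^in = Π. If γ(G_{≤r}) > k, then there exists a logical obstruction to the solvability of SA_k by G_{≤r}: a positive formula φ ∈ L_D^+ with I[SA_k] ⊨ φ and I[G_{≤r}] ⊭ φ. In particular, SA_k is not solvable by G_{≤r} (there is no morphism I[G_{≤r}] → I[SA_k]). -/

import Mathlib

/-- A simplicial model: a pure chromatic simplicial complex, colored by the
agents in `Agent`, whose vertices are labeled by sets of atomic propositions.
Each atomic proposition belongs to an agent (`agentOf`), and the label of a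
vertex only contains atoms of the color of that vertex. -/
structure SimplicialModel (Agent Atom Vertex : Type) [Fintype Agent]
    [DecidableEq Vertex] where
  simplices : Set (Finset Vertex)
  chi : Vertex → Agent
  label : Vertex → Set Atom
  agentOf : Atom → Agent
  simplex_nonempty : ∀ X ∈ simplices, X.Nonempty
  down_closed : ∀ X ∈ simplices, ∀ Y : Finset Vertex, Y ⊆ X → Y.Nonempty → Y ∈ simplices
  chi_injOn : ∀ X ∈ simplices, Set.InjOn chi ↑X
  pure : ∀ X ∈ simplices, ∃ F ∈ simplices, X ⊆ F ∧ F.card = Fintype.card Agent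
  label_agent : ∀ v, ∀ p ∈ label v, agentOf p = chi v

namespace SimplicialModel

variable {Agent Atom Vertex Vertex' : Type} [Fintype Agent]
  [DecidableEq Vertex] [DecidableEq Vertex']

/-- The facets (maximal simplices) of a simplicial model: the simplices with
exactly `|Agent|` vertices. -/
def facets (M : SimplicialModel Agent Atom Vertex) : Set (Finset Vertex) :=
  {X ∈ M.simplices | X.card = Fintype.card Agent}

/-- The type of facets of a simplicial model. -/
def Facet (M : SimplicialModel Agent Atom Vertex) : Type := {X : Finset Vertex // X ∈ M.facets}

/-- The labeling of a facet: union of the labels of its vertices. -/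
def flabel (M : SimplicialModel Agent Atom Vertex) (X : M.Facet) : Set Atom :=
  ⋃ v ∈ (X.1 : Finset Vertex), M.label v

/-- `χ(X ∩ Y)`: the set of colors of the common vertices of two facets. -/
def chiInter (M : SimplicialModel Agent Atom Vertex) (X Y : M.Facet) : Set Agent :=
  M.chi '' ↑(X.1 ∩ Y.1)

/-- The indistinguishability relation `X ∼ₐ Y` : `a ∈ χ(X ∩ Y)`. -/
def indist (M : SimplicialModel Agent Atom Vertex) (a : Agent) (X Y : M.Facet) : Prop :=
  a ∈ M.chiInter X Y

/-- A morphism of simplicial models: maps simplices to simplices, preserves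
colors and preserves labels. -/
def IsMorphism (M : SimplicialModel Agent Atom Vertex) (M' : SimplicialModel Agent Atom Vertex')
    (f : Vertex → Vertex') : Prop :=
  (∀ X ∈ M.simplices, X.image f ∈ M'.simplices) ∧
  (∀ v, M'.chi (f v) = M.chi v) ∧
  (∀ v, M'.label (f v) = M.label v)

/-- Smart constructor for a simplicial model: the complex generated by a given
set of facets, each of which has `|Agent|` vertices with pairwise distinct colors. -/
def ofFacets [Nonempty Agent] (Fs : Set (Finset Vertex)) (chi : Vertex → Agent)
    (label : Vertex → Set Atom) (agentOf : Atom → Agent)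
    (hcard : ∀ F ∈ Fs, F.card = Fintype.card Agent)
    (hinj : ∀ F ∈ Fs, Set.InjOn chi ↑F)
    (hlab : ∀ v, ∀ p ∈ label v, agentOf p = chi v) :
    SimplicialModel Agent Atom Vertex where
  simplices := {X | X.Nonempty ∧ ∃ F ∈ Fs, X ⊆ F}
  chi := chi
  label := label
  agentOf := agentOf
  simplex_nonempty := fun _ hX => hX.1
  down_closed := by
    rintro X ⟨-, F, hF, hXF⟩ Y hYX hY
    exact ⟨hY, F, hF, hYX.trans hXF⟩
  chi_injOn := by
    rintro X ⟨-, F, hF, hXF⟩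
    exact (hinj F hF).mono (Finset.coe_subset.mpr hXF)
  pure := by
    rintro X ⟨-, F, hF, hXF⟩
    refine ⟨F, ⟨?_, F, hF, subset_rfl⟩, hXF, hcard F hF⟩
    rw [← Finset.card_pos, hcard F hF]
    exact Fintype.card_pos
  label_agent := hlab

end SimplicialModel

/-- The language `L_K⁺` of positive epistemic formulas:
`φ ::= p | ¬p | φ ∨ φ | φ ∧ φ | K_a φ`. -/
inductive PosFormula (Agent Atom : Type) : Type where
  | atom : Atom → PosFormula Agent Atom
  | natom : Atom → PosFormula Agent Atom
  | or : PosFormula Agent Atom → PosFormula Agent Atom → PosFormula Agent Atom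
  | and : PosFormula Agent Atom → PosFormula Agent Atom → PosFormula Agent Atom
  | know : Agent → PosFormula Agent Atom → PosFormula Agent Atom

/-- The language `L_D⁺` of positive epistemic formulas with distributed knowledge:
`φ ::= p | ¬p | φ ∨ φ | φ ∧ φ | D_A φ`. -/
inductive PosFormulaD (Agent Atom : Type) : Type where
  | atom : Atom → PosFormulaD Agent Atom
  | natom : Atom → PosFormulaD Agent Atom
  | or : PosFormulaD Agent Atom → PosFormulaD Agent Atom → PosFormulaD Agent Atom
  | and : PosFormulaD Agent Atom → PosFormulaD Agent Atom → PosFormulaD Agent Atom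
  | dknow : Set Agent → PosFormulaD Agent Atom → PosFormulaD Agent Atom

namespace SimplicialModel

variable {Agent Atom Vertex Vertex' : Type} [Fintype Agent]
  [DecidableEq Vertex] [DecidableEq Vertex']

/-- Truth of a positive formula of `L_K⁺` at a facet of a simplicial model. -/
def satK (M : SimplicialModel Agent Atom Vertex) :
    PosFormula Agent Atom → M.Facet → Prop
  | .atom p, X => p ∈ M.flabel X
  | .natom p, X => p ∉ M.flabel X
  | .or φ ψ, X => M.satK φ X ∨ M.satK ψ X
  | .and φ ψ, X => M.satK φ X ∧ M.satK ψ X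
  | .know a φ, X => ∀ Y : M.Facet, M.indist a X Y → M.satK φ Y

/-- Truth of a positive formula of `L_D⁺` at a facet of a simplicial model. -/
def satD (M : SimplicialModel Agent Atom Vertex) :
    PosFormulaD Agent Atom → M.Facet → Prop
  | .atom p, X => p ∈ M.flabel X
  | .natom p, X => p ∉ M.flabel X
  | .or φ ψ, X => M.satD φ X ∨ M.satD ψ X
  | .and φ ψ, X => M.satD φ X ∧ M.satD ψ X
  | .dknow A φ, X => ∀ Y : M.Facet, A ⊆ M.chiInter X Y → M.satD φ Y

/-- A K-simulation of `M` by `M'`: (Atom) related facets have the same labels;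
(Forth) if `X R X'` and `X ∼ₐ Y` then there is `Y'` with `Y R Y'` and `X' ∼ₐ Y'`. -/
def IsKSimulation (M : SimplicialModel Agent Atom Vertex) (M' : SimplicialModel Agent Atom Vertex')
    (R : M.Facet → M'.Facet → Prop) : Prop :=
  (∀ X X', R X X' → M.flabel X = M'.flabel X') ∧
  (∀ (a : Agent) X Y X', R X X' → M.indist a X Y →
    ∃ Y', R Y Y' ∧ M'.indist a X' Y')

/-- A D-simulation of `M` by `M'`: (Atom) related facets have the same labels;
(D-Forth) if `X R X'` then for every facet `Y` there is `Y'` with `Y R Y'` and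
`χ(X ∩ Y) ⊆ χ'(X' ∩ Y')`. -/
def IsDSimulation (M : SimplicialModel Agent Atom Vertex) (M' : SimplicialModel Agent Atom Vertex')
    (R : M.Facet → M'.Facet → Prop) : Prop :=
  (∀ X X', R X X' → M.flabel X = M'.flabel X') ∧
  (∀ X X', R X X' → ∀ Y, ∃ Y', R Y Y' ∧ M.chiInter X Y ⊆ M'.chiInter X' Y')

/-- A relation on facets is total if every facet of `M` is related to some facet of `M'`. -/
def TotalRel (M : SimplicialModel Agent Atom Vertex) (M' : SimplicialModel Agent Atom Vertex')
    (R : M.Facet → M'.Facet → Prop) : Prop :=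
  ∀ X, ∃ X', R X X'

end SimplicialModel

/-- An ordered partition of the set of agents: a sequence
`∅ ≠ C₁ ⊊ C₂ ⊊ ⋯ ⊊ C_l = Π`. -/
structure OrderedPartition (Agent : Type) [Fintype Agent] [DecidableEq Agent] where
  parts : List (Finset Agent)
  ne : parts ≠ []
  head_nonempty : (parts.head ne).Nonempty
  chain : parts.Chain' (· ⊂ ·)
  last_univ : parts.getLast ne = Finset.univ

namespace OrderedPartition

variable {Agent : Type} [Fintype Agent] [DecidableEq Agent]

/-- `C_{min {j : a ∈ C_j}}`: the first component of the ordered partition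
containing the agent `a` (it exists since the last component is `Π`). -/
def myPart (γ : OrderedPartition Agent) (a : Agent) : Finset Agent :=
  (γ.parts.find? (fun C => decide (a ∈ C))).getD Finset.univ

end OrderedPartition

/-- `Views r`: the possible views after communicating `r` times.
`Views 0 = V^in` and `Views (r+1)` consists of sets of pairs of an agent and a
view in `Views r`. -/
def Views (Agent Value : Type) : ℕ → Type
  | 0 => Value
  | r + 1 => Set (Agent × Views Agent Value r)

/-- `view^r_a(I, γ₁, …, γ_r)`: the view of agent `a` after `r` rounds of
immediate snapshot from the input facet `I` (given by `i : Agent → Value`),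
scheduled by the ordered partitions `γ₁, …, γ_r`. -/
def view {Agent Value : Type} [Fintype Agent] [DecidableEq Agent] (i : Agent → Value) :
    (r : ℕ) → (Fin r → OrderedPartition Agent) → Agent → Views Agent Value r
  | 0, _, a => i a
  | r + 1, γ, a =>
      {x | ∃ p ∈ (γ (Fin.last r)).myPart a,
        x = (p, view i r (fun j => γ j.castSucc) p)}

/-- The flattening map `car : Views^{r+1} → Views^1`:
`car(w) = w` for `w ∈ Views^1`, and `car(w) = ⋃_{(p,v) ∈ w} car(v)` otherwise. -/
def car {Agent Value : Type} : (r : ℕ) → Views Agent Value (r + 1) → Set (Agent × Value)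
  | 0, w => w
  | r + 1, w => {q | ∃ x ∈ (show Set (Agent × Views Agent Value (r + 1)) from w),
      q ∈ car r x.2}

attribute [local instance] Classical.decEq

noncomputable section

variable (Agent : Type) [Fintype Agent] [DecidableEq Agent] [Nonempty Agent]

/-- The facets of the product update `I[SA_k]` of the input model with the
`k`-set agreement task (with `V^in = V^out = Agent`): a vertex `(a, i, d)`
records agent `a`'s input `i` and decision `d`.  A facet is determined by an
input assignment `i` and a decision map `d` with `|d(Π)| ≤ k` whose decided
values all appear among the inputs (the precondition of the task). -/
def SAfacets (k : ℕ) : Set (Finset (Agent × Agent × Agent)) :=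
  {X | ∃ i d : Agent → Agent,
    (Finset.univ.image d).card ≤ k ∧ (∀ a : Agent, ∃ b : Agent, i b = d a) ∧
    X = Finset.univ.image (fun a => (a, i a, d a))}

/-- The product update `I[SA_k]` as a simplicial model.  Atomic propositions
are `ip_a^v ≅ (a, v) : Agent × Agent`; the label of `(a, i, d)` is `{ip_a^i}`. -/
def ISA (k : ℕ) : SimplicialModel Agent (Agent × Agent) (Agent × Agent × Agent) :=
  SimplicialModel.ofFacets (SAfacets Agent k) (fun v => v.1) (fun v => {(v.1, v.2.1)})
    Prod.fst
    (by
      rintro F ⟨i, d, -, -, rfl⟩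
      rw [Finset.card_image_of_injective _
        (fun a b h => congrArg Prod.fst h : Function.Injective fun a => (a, i a, d a))]
      exact Finset.card_univ)
    (by
      rintro F ⟨i, d, -, -, rfl⟩ x hx y hy hxy
      simp only [Finset.coe_image, Set.mem_image, Finset.mem_coe] at hx hy
      obtain ⟨a, -, rfl⟩ := hx
      obtain ⟨b, -, rfl⟩ := hy
      exact congrArg (fun c => (c, i c, d c)) hxy)
    (by
      rintro v p hp
      rw [Set.mem_singleton_iff] at hp
      subst hp
      rfl)

/-- The facets of the product update `I[IS^r]` of the input model with the
`r`-iterated immediate snapshot protocol: a vertex `(a, i, v)` records agent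
`a`'s input `i` and its view `v` after `r` rounds; a facet is determined by an
input assignment and a sequence of `r` ordered partitions. -/
def ISfacets (r : ℕ) : Set (Finset (Agent × Agent × Views Agent Agent r)) :=
  {X | ∃ (i : Agent → Agent) (γ : Fin r → OrderedPartition Agent),
    X = Finset.univ.image (fun a => (a, i a, view i r γ a))}

/-- The product update `I[IS^r]` as a simplicial model. -/
def IIS (r : ℕ) :
    SimplicialModel Agent (Agent × Agent) (Agent × Agent × Views Agent Agent r) :=
  SimplicialModel.ofFacets (ISfacets Agent r) (fun v => v.1) (fun v => {(v.1, v.2.1)})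
    Prod.fst
    (by
      rintro F ⟨i, γ, rfl⟩
      rw [Finset.card_image_of_injective _
        (fun a b h => congrArg Prod.fst h :
          Function.Injective fun a => (a, i a, view i r γ a))]
      exact Finset.card_univ)
    (by
      rintro F ⟨i, γ, rfl⟩ x hx y hy hxy
      simp only [Finset.coe_image, Set.mem_image, Finset.mem_coe] at hx hy
      obtain ⟨a, -, rfl⟩ := hx
      obtain ⟨b, -, rfl⟩ := hy
      exact congrArg (fun c => (c, i c, view i r γ c)) hxy)
    (by
      rintro v p hp
      rw [Set.mem_singleton_iff] at hp
      subst hp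
      rfl)

end

/-- A directed communication graph on the set of agents; every node has a
self-loop. `E p q` means `(p, q)` is an edge. -/
structure CommGraph (Agent : Type) where
  E : Agent → Agent → Prop
  self_loop : ∀ p, E p p

namespace CommGraph

variable {Agent : Type}

/-- The set of in-neighbors of `p`: `In(p, G) = {q : (p, q) ∈ E(G)}`. -/
def In (G : CommGraph Agent) (p : Agent) : Set Agent := {q | G.E p q}

/-- The set of out-neighbors of `p`: `Out(p, G) = {q : (q, p) ∈ E(G)}`. -/
def Out (G : CommGraph Agent) (p : Agent) : Set Agent := {q | G.E q p}

/-- Out-neighbors of a set of agents. -/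
def OutS (G : CommGraph Agent) (P : Set Agent) : Set Agent := ⋃ p ∈ P, G.Out p

/-- Composition of graphs: `(p, q) ∈ E(H ∘ G)` iff `Out(p, G) ∩ In(q, H) ≠ ∅`. -/
def comp (H G : CommGraph Agent) : CommGraph Agent where
  E := fun p q => (G.Out p ∩ H.In q).Nonempty
  self_loop := fun p => ⟨p, G.self_loop p, H.self_loop p⟩

/-- The domination number `γ(G)`: the least size of a set `P` of agents with
`Out(P, G) = Π`. -/
noncomputable def domination [Fintype Agent] (G : CommGraph Agent) : ℕ :=
  sInf {i | ∃ P : Finset Agent, P.card = i ∧ G.OutS ↑P = Set.univ}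

/-- `G_{≤r} = G_r ∘ (G_{r-1} ∘ (⋯ (G₂ ∘ G₁) ⋯))`. -/
def upTo (G : ℕ → CommGraph Agent) : ℕ → CommGraph Agent
  | 0 => G 0
  | 1 => G 1
  | r + 2 => (G (r + 2)).comp (upTo G (r + 1))

end CommGraph

noncomputable section

variable (Agent : Type) [Fintype Agent] [DecidableEq Agent] [Nonempty Agent]

/-- The facets of the product update `I[G_{≤r}]` of the input model with the
protocol associated with a know-all instance: a vertex `(a, i, v)` records the
input `i` of agent `a` and its view `v = {(p, input p) : p ∈ In(a, G_{≤r})}`. -/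
def KAfacets (G : CommGraph Agent) :
    Set (Finset (Agent × Agent × Set (Agent × Agent))) :=
  {X | ∃ input : Agent → Agent,
    X = Finset.univ.image fun a =>
      (a, input a, {x | ∃ p ∈ G.In a, x = (p, input p)})}

/-- The product update `I[G_{≤r}]` as a simplicial model (for `V^in = Π`). -/
def KAmodel (G : CommGraph Agent) :
    SimplicialModel Agent (Agent × Agent) (Agent × Agent × Set (Agent × Agent)) :=
  SimplicialModel.ofFacets (KAfacets Agent G) (fun v => v.1) (fun v => {(v.1, v.2.1)})
    Prod.fst
    (by
      rintro F ⟨input, rfl⟩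
      rw [Finset.card_image_of_injective _
        (fun a b h => congrArg Prod.fst h : Function.Injective fun a =>
          (a, input a, {x | ∃ p ∈ G.In a, x = (p, input p)}))]
      exact Finset.card_univ)
    (by
      rintro F ⟨input, rfl⟩ x hx y hy hxy
      simp only [Finset.coe_image, Set.mem_image, Finset.mem_coe] at hx hy
      obtain ⟨a, -, rfl⟩ := hx
      obtain ⟨b, -, rfl⟩ := hy
      exact congrArg
        (fun c => (c, input c, {x | ∃ p ∈ G.In c, x = (p, input p)})) hxy)
    (by
      rintro v p hp
      rw [Set.mem_singleton_iff] at hp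
      subst hp
      rfl)

end

section ObstructionAux

open SimplicialModel

/-- Finite disjunction of a list of formulas, with a default for the empty list. -/
def bigOr {A B : Type} (d : PosFormulaD A B) : List (PosFormulaD A B) → PosFormulaD A B
  | [] => d
  | [φ] => φ
  | φ :: ψ :: l => .or φ (bigOr d (ψ :: l))

/-- Finite conjunction of a list of formulas, with a default for the empty list. -/
def bigAnd {A B : Type} (d : PosFormulaD A B) : List (PosFormulaD A B) → PosFormulaD A B
  | [] => d
  | [φ] => φ
  | φ :: ψ :: l => .and φ (bigAnd d (ψ :: l))

lemma satD_bigOr {Agent Atom V : Type} [Fintype Agent] [DecidableEq V]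
    (M : SimplicialModel Agent Atom V) (d : PosFormulaD Agent Atom) :
    ∀ (l : List (PosFormulaD Agent Atom)), l ≠ [] → ∀ X : M.Facet,
      (M.satD (bigOr d l) X ↔ ∃ φ ∈ l, M.satD φ X)
  | [], h, _ => absurd rfl h
  | [φ], _, X => by simp [bigOr]
  | φ :: ψ :: l, _, X => by
    have ih := satD_bigOr M d (ψ :: l) (by simp) X
    show (M.satD φ X ∨ M.satD (bigOr d (ψ :: l)) X) ↔ _
    rw [ih]
    constructor
    · rintro (h | ⟨χ, hχ, h⟩)
      · exact ⟨φ, List.mem_cons_self, h⟩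
      · exact ⟨χ, List.mem_cons_of_mem _ hχ, h⟩
    · rintro ⟨χ, hχ, h⟩
      rcases List.mem_cons.1 hχ with rfl | hχ
      · exact Or.inl h
      · exact Or.inr ⟨χ, hχ, h⟩

lemma satD_bigAnd {Agent Atom V : Type} [Fintype Agent] [DecidableEq V]
    (M : SimplicialModel Agent Atom V) (d : PosFormulaD Agent Atom) :
    ∀ (l : List (PosFormulaD Agent Atom)), l ≠ [] → ∀ X : M.Facet,
      (M.satD (bigAnd d l) X ↔ ∀ φ ∈ l, M.satD φ X)
  | [], h, _ => absurd rfl h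
  | [φ], _, X => by simp [bigAnd]
  | φ :: ψ :: l, _, X => by
    have ih := satD_bigAnd M d (ψ :: l) (by simp) X
    show (M.satD φ X ∧ M.satD (bigAnd d (ψ :: l)) X) ↔ _
    rw [ih]
    constructor
    · rintro ⟨h1, h2⟩ χ hχ
      rcases List.mem_cons.1 hχ with rfl | hχ
      · exact h1
      · exact h2 χ hχ
    · intro h
      exact ⟨h φ List.mem_cons_self, fun χ hχ => h χ (List.mem_cons_of_mem _ hχ)⟩

lemma map_toList_ne_nil {α β : Type} (s : Finset α) (hs : s.Nonempty) (f : α → β) :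
    s.toList.map f ≠ [] := by
  obtain ⟨x, hx⟩ := hs
  intro h
  have hmem : f x ∈ s.toList.map f := List.mem_map.2 ⟨x, Finset.mem_toList.2 hx, rfl⟩
  rw [h] at hmem
  exact List.not_mem_nil hmem

lemma ofFacets_facets {Agent Atom Vertex : Type} [Fintype Agent] [DecidableEq Vertex]
    [Nonempty Agent]
    {Fs : Set (Finset Vertex)} {chi : Vertex → Agent} {label : Vertex → Set Atom}
    {agentOf : Atom → Agent}
    {hcard : ∀ F ∈ Fs, F.card = Fintype.card Agent}
    {hinj : ∀ F ∈ Fs, Set.InjOn chi ↑F}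
    {hlab : ∀ v, ∀ p ∈ label v, agentOf p = chi v} :
    (SimplicialModel.ofFacets Fs chi label agentOf hcard hinj hlab).facets = Fs := by
  ext X
  constructor
  · rintro ⟨⟨-, F, hF, hXF⟩, hc⟩
    have hXF' : X = F := Finset.eq_of_subset_of_card_le hXF (by rw [hc, hcard F hF])
    rwa [hXF']
  · intro hX
    refine ⟨⟨?_, X, hX, subset_rfl⟩, hcard X hX⟩
    rw [← Finset.card_pos, hcard X hX]
    exact Fintype.card_pos

/-- Pulling back valid positive formulas along a facet map that preserves labels
and does not decrease `χ(X ∩ Y)`. -/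
lemma satD_pullback {Agent Atom V V' : Type} [Fintype Agent] [DecidableEq V] [DecidableEq V']
    (M : SimplicialModel Agent Atom V) (M' : SimplicialModel Agent Atom V')
    (F : M.Facet → M'.Facet)
    (hlabel : ∀ X, M'.flabel (F X) = M.flabel X)
    (hchi : ∀ X Y, M.chiInter X Y ⊆ M'.chiInter (F X) (F Y)) :
    ∀ (φ : PosFormulaD Agent Atom) (X : M.Facet), M'.satD φ (F X) → M.satD φ X := by
  intro φ
  induction φ with
  | atom p =>
    intro X h
    show p ∈ M.flabel X
    rw [← hlabel X]; exact h
  | natom p =>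
    intro X h
    show p ∉ M.flabel X
    rw [← hlabel X]; exact h
  | or φ ψ ihφ ihψ =>
    intro X h
    rcases (show M'.satD φ (F X) ∨ M'.satD ψ (F X) from h) with h | h
    · exact Or.inl (ihφ X h)
    · exact Or.inr (ihψ X h)
  | and φ ψ ihφ ihψ =>
    intro X h
    exact ⟨ihφ X h.1, ihψ X h.2⟩
  | dknow A φ ih =>
    intro X h Y hAY
    exact ih Y (h (F Y) (hAY.trans (hchi X Y)))

section Models

variable {Agent : Type} [Fintype Agent] [DecidableEq Agent] [Nonempty Agent]

lemma ISA_facets (k : ℕ) : (ISA Agent k).facets = SAfacets Agent k :=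
  ofFacets_facets

lemma KA_facets (G : CommGraph Agent) : (KAmodel Agent G).facets = KAfacets Agent G :=
  ofFacets_facets

lemma ISA_chiInter (k : ℕ) (X Y : (ISA Agent k).Facet) (i d i' d' : Agent → Agent)
    (hX : X.1 = Finset.univ.image fun a => (a, i a, d a))
    (hY : Y.1 = Finset.univ.image fun a => (a, i' a, d' a))
    (q : Agent) :
    q ∈ (ISA Agent k).chiInter X Y ↔ (i q = i' q ∧ d q = d' q) := by
  constructor
  · rintro ⟨v, hv, rfl⟩
    rw [hX, hY] at hv
    simp only [Finset.coe_inter, Set.mem_inter_iff, Finset.mem_coe, Finset.coe_image,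
      Set.mem_image, Finset.mem_coe, Finset.mem_image] at hv
    obtain ⟨h1, h2⟩ := hv
    obtain ⟨a, -, rfl⟩ := h1
    obtain ⟨b, -, hb⟩ := h2
    injection hb with hb1 hb23
    subst hb1
    injection hb23 with hb2 hb3
    exact ⟨hb2.symm, hb3.symm⟩
  · rintro ⟨h1, h2⟩
    refine ⟨(q, i q, d q), ?_, rfl⟩
    rw [hX, hY]
    simp only [Finset.coe_inter, Set.mem_inter_iff, Finset.mem_coe, Finset.mem_image]
    exact ⟨⟨q, Finset.mem_univ q, rfl⟩, ⟨q, Finset.mem_univ q, by rw [h1, h2]⟩⟩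

lemma KA_chiInter (G : CommGraph Agent) (X Y : (KAmodel Agent G).Facet)
    (i : Agent → Agent) (V : Agent → Set (Agent × Agent))
    (i' : Agent → Agent) (V' : Agent → Set (Agent × Agent))
    (hX : X.1 = Finset.univ.image fun a => (a, i a, V a))
    (hY : Y.1 = Finset.univ.image fun a => (a, i' a, V' a))
    (q : Agent) :
    q ∈ (KAmodel Agent G).chiInter X Y ↔ (i q = i' q ∧ V q = V' q) := by
  constructor
  · rintro ⟨v, hv, rfl⟩
    rw [hX, hY] at hv
    simp only [Finset.coe_inter, Set.mem_inter_iff, Finset.mem_coe, Finset.mem_image] at hv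
    obtain ⟨h1, h2⟩ := hv
    obtain ⟨a, -, rfl⟩ := h1
    obtain ⟨b, -, hb⟩ := h2
    injection hb with hb1 hb23
    subst hb1
    injection hb23 with hb2 hb3
    exact ⟨hb2.symm, hb3.symm⟩
  · rintro ⟨h1, h2⟩
    refine ⟨(q, i q, V q), ?_, rfl⟩
    rw [hX, hY]
    simp only [Finset.coe_inter, Set.mem_inter_iff, Finset.mem_coe, Finset.mem_image]
    exact ⟨⟨q, Finset.mem_univ q, rfl⟩, ⟨q, Finset.mem_univ q, by rw [h1, h2]⟩⟩

lemma ISA_flabel (k : ℕ) (X : (ISA Agent k).Facet) (i d : Agent → Agent)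
    (hX : X.1 = Finset.univ.image fun a => (a, i a, d a)) (b v : Agent) :
    ((b, v) ∈ (ISA Agent k).flabel X) ↔ i b = v := by
  simp only [SimplicialModel.flabel, Set.mem_iUnion, hX, Finset.mem_image]
  constructor
  · rintro ⟨w, ⟨a, -, rfl⟩, hp⟩
    have hp' : ((b, v) : Agent × Agent) = (a, i a) := hp
    injection hp' with h1 h2
    subst h1; exact h2.symm
  · intro h
    refine ⟨(b, i b, d b), ⟨b, Finset.mem_univ b, rfl⟩, ?_⟩
    show ((b, v) : Agent × Agent) = (b, i b)
    rw [h]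

lemma KA_flabel (G : CommGraph Agent) (X : (KAmodel Agent G).Facet)
    (i : Agent → Agent) (V : Agent → Set (Agent × Agent))
    (hX : X.1 = Finset.univ.image fun a => (a, i a, V a)) (b v : Agent) :
    ((b, v) ∈ (KAmodel Agent G).flabel X) ↔ i b = v := by
  simp only [SimplicialModel.flabel, Set.mem_iUnion, hX, Finset.mem_image]
  constructor
  · rintro ⟨w, ⟨a, -, rfl⟩, hp⟩
    have hp' : ((b, v) : Agent × Agent) = (a, i a) := hp
    injection hp' with h1 h2
    subst h1; exact h2.symm
  · intro h
    refine ⟨(b, i b, V b), ⟨b, Finset.mem_univ b, rfl⟩, ?_⟩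
    show ((b, v) : Agent × Agent) = (b, i b)
    rw [h]

/-- The inner disjunction `⋁_{b ∈ Π, v ∈ P} ip_b^v`. -/
noncomputable def innF (a₀ : Agent) (P : Finset Agent) : PosFormulaD Agent (Agent × Agent) :=
  bigOr (.atom (a₀, a₀)) (((Finset.univ ×ˢ P).toList).map PosFormulaD.atom)

/-- The block `⋀_{q ∈ Π} D_{{q}} ⋁_{b ∈ Π, v ∈ P} ip_b^v`. -/
noncomputable def blkF (a₀ : Agent) (P : Finset Agent) : PosFormulaD Agent (Agent × Agent) :=
  bigAnd (.atom (a₀, a₀))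
    (((Finset.univ : Finset Agent).toList).map fun q => PosFormulaD.dknow {q} (innF a₀ P))

/-- The obstruction formula: `⋁_{∅ ≠ P, |P| ≤ k} ⋀_{q} D_{{q}} ⋁_{b, v ∈ P} ip_b^v`. -/
noncomputable def obsF (a₀ : Agent) (k : ℕ) : PosFormulaD Agent (Agent × Agent) :=
  bigOr (.atom (a₀, a₀))
    ((((Finset.univ : Finset (Finset Agent)).filter
        fun P => P.Nonempty ∧ P.card ≤ k).toList).map (blkF a₀))

end Models

end ObstructionAux

open SimplicialModel CommGraph in
/-- Know-all model: if `γ(G_{≤r}) > k`, then there exists a logical obstruction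
to the solvability of `SA_k` by `G_{≤r}`: a positive formula `φ ∈ L_D⁺` with
`I[SA_k] ⊨ φ` and `I[G_{≤r}] ⊭ φ`.  In particular, `SA_k` is not solvable by
`G_{≤r}`: there is no morphism `I[G_{≤r}] → I[SA_k]`. -/
theorem knowall_obstruction_and_unsolvability
    {Agent : Type} [Fintype Agent] [DecidableEq Agent] [Nonempty Agent]
    (G : ℕ → CommGraph Agent) (r k : ℕ) (hr : 1 ≤ r)
    (hk : 1 ≤ k) (hk' : k ≤ Fintype.card Agent)
    (hdom : k < (upTo G r).domination) :
    (∃ φ : PosFormulaD Agent (Agent × Agent),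
      (∀ X' : (ISA Agent k).Facet, (ISA Agent k).satD φ X') ∧
      ¬ (∀ X : (KAmodel Agent (upTo G r)).Facet,
          (KAmodel Agent (upTo G r)).satD φ X)) ∧
    ¬ ∃ f : (Agent × Agent × Set (Agent × Agent)) → (Agent × Agent × Agent),
      SimplicialModel.IsMorphism (KAmodel Agent (upTo G r)) (ISA Agent k) f := by
  classical
  obtain ⟨a₀⟩ := (inferInstance : Nonempty Agent)
  set H := upTo G r with hH
  -- The key combinatorial consequence of `k < γ(H)`.
  have key : ∀ P : Finset Agent, P.card ≤ k → ∃ q : Agent, ∀ p ∈ P, p ∉ H.In q := by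
    intro P hP
    by_contra hcon
    push_neg at hcon
    have hcov : H.OutS ↑P = Set.univ := by
      ext q
      simp only [CommGraph.OutS, Set.mem_iUnion, Set.mem_univ, iff_true]
      obtain ⟨p, hp, hpin⟩ := hcon q
      exact ⟨p, hp, hpin⟩
    have hle : H.domination ≤ P.card := Nat.sInf_le ⟨P, rfl, hcov⟩
    omega
  -- nonemptiness of the various lists
  have hPs : ((Finset.univ : Finset (Finset Agent)).filter
      fun P => P.Nonempty ∧ P.card ≤ k).Nonempty := by
    refine ⟨{a₀}, Finset.mem_filter.2 ⟨Finset.mem_univ _, Finset.singleton_nonempty a₀, ?_⟩⟩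
    simpa using hk
  -- Claim A : the formula is valid in I[SA_k].
  have claimA : ∀ X' : (ISA Agent k).Facet, (ISA Agent k).satD (obsF a₀ k) X' := by
    intro X'
    have hX' : X'.1 ∈ SAfacets Agent k := by
      rw [← ISA_facets (Agent := Agent) k]; exact X'.2
    obtain ⟨i, d, hdk, hval, hXeq⟩ := hX'
    have hPmem : Finset.univ.image d ∈
        (Finset.univ : Finset (Finset Agent)).filter fun P => P.Nonempty ∧ P.card ≤ k :=
      Finset.mem_filter.2 ⟨Finset.mem_univ _, Finset.univ_nonempty.image d, hdk⟩
    rw [obsF, satD_bigOr _ _ _ (map_toList_ne_nil _ ⟨_, hPmem⟩ _)]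
    refine ⟨blkF a₀ (Finset.univ.image d),
      List.mem_map.2 ⟨_, Finset.mem_toList.2 hPmem, rfl⟩, ?_⟩
    rw [blkF, satD_bigAnd _ _ _ (map_toList_ne_nil _ Finset.univ_nonempty _)]
    intro ψ hψ
    obtain ⟨q, -, rfl⟩ := List.mem_map.1 hψ
    intro Y hYq
    have hY' : Y.1 ∈ SAfacets Agent k := by
      rw [← ISA_facets (Agent := Agent) k]; exact Y.2
    obtain ⟨i', d', -, hval', hYeq⟩ := hY'
    have hq2 : i q = i' q ∧ d q = d' q :=
      (ISA_chiInter k X' Y i d i' d' hXeq hYeq q).1 (hYq (Set.mem_singleton q))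
    obtain ⟨b, hb⟩ := hval' q
    have hdqP : d q ∈ Finset.univ.image d := Finset.mem_image_of_mem d (Finset.mem_univ q)
    rw [innF, satD_bigOr _ _ _
      (map_toList_ne_nil _ (Finset.univ_nonempty.product ⟨_, hdqP⟩) _)]
    refine ⟨PosFormulaD.atom (b, d q),
      List.mem_map.2 ⟨(b, d q), Finset.mem_toList.2
        (Finset.mem_product.2 ⟨Finset.mem_univ _, hdqP⟩), rfl⟩, ?_⟩
    show (b, d q) ∈ (ISA Agent k).flabel Y
    rw [ISA_flabel k Y i' d' hYeq, hb]
    exact hq2.2.symm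
  -- The counterexample facet of the know-all model: input = id.
  have hX₀ : (Finset.univ.image fun a : Agent =>
      (a, id a, {x : Agent × Agent | ∃ p ∈ H.In a, x = (p, id p)}))
      ∈ (KAmodel Agent H).facets := by
    rw [KA_facets]
    exact ⟨id, rfl⟩
  -- Claim B : the formula is not valid in I[G_{≤r}].
  have claimB : ¬ ∀ X : (KAmodel Agent H).Facet, (KAmodel Agent H).satD (obsF a₀ k) X := by
    intro hall
    have h0 := hall ⟨_, hX₀⟩
    rw [obsF] at h0
    obtain ⟨ψ, hψ, hsat⟩ := (satD_bigOr _ _ _ (map_toList_ne_nil _ hPs _) _).1 h0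
    obtain ⟨P, hPmem, rfl⟩ := List.mem_map.1 hψ
    rw [Finset.mem_toList, Finset.mem_filter] at hPmem
    obtain ⟨-, hPne, hPk⟩ := hPmem
    obtain ⟨q, hq⟩ := key P hPk
    have hqP : q ∉ P := fun h => hq q h (H.self_loop q)
    rw [blkF] at hsat
    replace hsat := (satD_bigAnd _ _ _ (map_toList_ne_nil _ Finset.univ_nonempty _) _).1 hsat
    have hdq := hsat (PosFormulaD.dknow {q} (innF a₀ P))
      (List.mem_map.2 ⟨q, Finset.mem_toList.2 (Finset.mem_univ q), rfl⟩)
    set i' : Agent → Agent := fun p => if p ∈ P then q else p with hi'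
    have hY : (Finset.univ.image fun a : Agent =>
        (a, i' a, {x : Agent × Agent | ∃ p ∈ H.In a, x = (p, i' p)}))
        ∈ (KAmodel Agent H).facets := by
      rw [KA_facets]
      exact ⟨i', rfl⟩
    have hi'fix : ∀ p, p ∉ P → i' p = p := by
      intro p hp
      simp [hi', hp]
    have hchiq : ({q} : Set Agent) ⊆ (KAmodel Agent H).chiInter ⟨_, hX₀⟩ ⟨_, hY⟩ := by
      rw [Set.singleton_subset_iff]
      rw [KA_chiInter H ⟨_, hX₀⟩ ⟨_, hY⟩ id
        (fun a => {x : Agent × Agent | ∃ p ∈ H.In a, x = (p, id p)}) i'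
        (fun a => {x : Agent × Agent | ∃ p ∈ H.In a, x = (p, i' p)}) rfl rfl q]
      constructor
      · exact (hi'fix q hqP).symm
      · ext x
        constructor
        · rintro ⟨p, hp, rfl⟩
          exact ⟨p, hp, by rw [hi'fix p (fun hpP => hq p hpP hp)]; rfl⟩
        · rintro ⟨p, hp, rfl⟩
          exact ⟨p, hp, by rw [hi'fix p (fun hpP => hq p hpP hp)]; rfl⟩
    have hinn := hdq ⟨_, hY⟩ hchiq
    rw [innF] at hinn
    replace hinn := (satD_bigOr _ _ _
      (map_toList_ne_nil _ (Finset.univ_nonempty.product hPne) _) _).1 hinn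
    obtain ⟨χ, hχ, hsatχ⟩ := hinn
    obtain ⟨⟨b, v⟩, hbv, rfl⟩ := List.mem_map.1 hχ
    rw [Finset.mem_toList, Finset.mem_product] at hbv
    have hvP : v ∈ P := hbv.2
    have hbveq : i' b = v := (KA_flabel H ⟨_, hY⟩ i'
      (fun a => {x : Agent × Agent | ∃ p ∈ H.In a, x = (p, i' p)}) rfl b v).1 hsatχ
    by_cases hbP : b ∈ P
    · have : i' b = q := by simp [hi', hbP]
      rw [this] at hbveq
      exact hqP (hbveq ▸ hvP)
    · rw [hi'fix b hbP] at hbveq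
      exact hbP (hbveq ▸ hvP)
  refine ⟨⟨obsF a₀ k, claimA, claimB⟩, ?_⟩
  rintro ⟨f, hsim, hchi, hlab⟩
  have himg : ∀ X : (KAmodel Agent H).Facet, X.1.image f ∈ (ISA Agent k).facets := by
    intro X
    have hinj : Set.InjOn f ↑X.1 := by
      intro x hx y hy hxy
      exact (KAmodel Agent H).chi_injOn X.1 X.2.1 hx hy (by rw [← hchi x, ← hchi y, hxy])
    refine ⟨hsim X.1 X.2.1, ?_⟩
    rw [Finset.card_image_of_injOn hinj]
    exact X.2.2
  have hlabF : ∀ X : (KAmodel Agent H).Facet,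
      (ISA Agent k).flabel ⟨X.1.image f, himg X⟩ = (KAmodel Agent H).flabel X := by
    intro X
    ext p
    simp only [SimplicialModel.flabel, Set.mem_iUnion]
    constructor
    · rintro ⟨w, hw, hp⟩
      obtain ⟨a, ha, rfl⟩ := Finset.mem_image.1 hw
      exact ⟨a, ha, by rwa [hlab] at hp⟩
    · rintro ⟨a, ha, hp⟩
      exact ⟨f a, Finset.mem_image_of_mem f ha, by rwa [hlab a]⟩
  have hchiF : ∀ X Y : (KAmodel Agent H).Facet,
      (KAmodel Agent H).chiInter X Y ⊆
        (ISA Agent k).chiInter ⟨X.1.image f, himg X⟩ ⟨Y.1.image f, himg Y⟩ := by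
    rintro X Y a ⟨v, hv, rfl⟩
    refine ⟨f v, ?_, hchi v⟩
    simp only [Finset.coe_inter, Set.mem_inter_iff, Finset.mem_coe, Finset.mem_inter,
      Finset.mem_image] at hv ⊢
    exact ⟨⟨v, hv.1, rfl⟩, ⟨v, hv.2, rfl⟩⟩
  exact claimB fun X =>
    satD_pullback (KAmodel Agent H) (ISA Agent k)
      (fun X => ⟨X.1.image f, himg X⟩) hlabF hchiF (obsF a₀ k) X (claimA _)
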